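/- For d = 2j+1, equal parameters b = a, and real r, s with jr - α - js + β not congruent to 0 modulo d, the overlap satisfies ⟨jα;ra | jβ;sa⟩ = (1/d) q^{j(β-α)} · sin(π(jr - α - js + β)) / sin(π(jr - α - js + β)/d). -/

import Mathlib

open Complex Finset

/-- The phase function `ρ(j,m,x,y,z) = (j+m)(j-m+1)x/2 - jmy + (j+m)z`. -/
noncomputable def rho (j m x y z : ℝ) : ℝ :=
  (j + m) * (j - m + 1) * x / 2 - j * m * y + (j + m) * z

/-- The vector `|jα;ra⟩` of components `(1/√d) q^{ρ(j, k-j, a, r, α)}`, `k = 0,…,d-1`,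
where `j = (d-1)/2` and `q^x = exp(2πix/d)`. -/
noncomputable def mubVec (d : ℕ) (a r α : ℝ) : Fin d → ℂ := fun k =>
  ((1 / Real.sqrt d : ℝ) : ℂ) *
    Complex.exp (2 * (Real.pi : ℂ) * Complex.I *
      ((rho (((d : ℝ) - 1) / 2) ((k : ℝ) - ((d : ℝ) - 1) / 2) a r α : ℝ) / (d : ℂ)))

/-- The overlap `⟨jα;ra | jβ;sb⟩` (standard Hermitian inner product on `ℂ^d`). -/
noncomputable def overlap (d : ℕ) (a r : ℝ) (α : ℝ) (b s : ℝ) (β : ℝ) : ℂ :=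
  ∑ k : Fin d, (starRingEnd ℂ) (mubVec d a r α k) * mubVec d b s β k

set_option maxHeartbeats 1600000 in
/-- for `b = a` and `jr - α - js + β ≢ 0 (mod d)`,
`⟨jα;ra | jβ;sa⟩ = (1/d) q^{j(β-α)} · sin(π(jr-α-js+β)) / sin(π(jr-α-js+β)/d)`,
where `j = (d-1)/2` and `q^x = exp(2πix/d)`. -/
theorem stmt_9 (d : ℕ) (hd : 2 ≤ d) (a r s : ℝ) (α β : ℕ) (hα : α < d) (hβ : β < d)
    (hθ : ∀ k : ℤ, ((d : ℝ) - 1) / 2 * r - α - ((d : ℝ) - 1) / 2 * s + β ≠ d * k) :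
    overlap d a r α a s β =
      (1 / (d : ℂ)) *
        Complex.exp (2 * (Real.pi : ℂ) * Complex.I *
          ((((d : ℝ) - 1) / 2 * ((β : ℝ) - α) : ℝ) / (d : ℂ))) *
        ((Real.sin (Real.pi * (((d : ℝ) - 1) / 2 * r - α - ((d : ℝ) - 1) / 2 * s + β)) : ℝ) /
          (Real.sin (Real.pi * (((d : ℝ) - 1) / 2 * r - α - ((d : ℝ) - 1) / 2 * s + β) / d) : ℝ)) := by
  have hdR : (d : ℝ) ≠ 0 := Nat.cast_ne_zero.mpr (by omega)
  have hdC : (d : ℂ) ≠ 0 := Nat.cast_ne_zero.mpr (by omega)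
  set θ : ℝ := ((d : ℝ) - 1) / 2 * r - ↑α - ((d : ℝ) - 1) / 2 * s + ↑β with hθdef
  set z : ℂ := Complex.exp (2 * (Real.pi : ℂ) * Complex.I * ((θ : ℂ) / (d : ℂ))) with hzdef
  -- the summand
  have key : ∀ k : Fin d, (starRingEnd ℂ) (mubVec d a r α k) * mubVec d a s β k
      = (1 / (d : ℂ)) * Complex.exp (2 * (Real.pi : ℂ) * Complex.I *
            ((((d : ℝ) - 1) / 2 * ((β : ℝ) - α) : ℝ) / (d : ℂ)))
        * Complex.exp (2 * (Real.pi : ℂ) * Complex.I *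
            ((-(((d : ℝ) - 1) / 2 * θ) : ℝ) / (d : ℂ)))
        * z ^ (k : ℕ) := by
    intro k
    simp only [mubVec, map_mul, ← Complex.exp_conj, map_div₀, map_ofNat,
      Complex.conj_ofReal, Complex.conj_I, map_natCast, hzdef]
    rw [mul_mul_mul_comm, ← Complex.ofReal_mul,
      show (1 / Real.sqrt d) * (1 / Real.sqrt d) = 1 / (d : ℝ) by
        rw [div_mul_div_comm, one_mul, Real.mul_self_sqrt (by positivity)]]
    rw [← Complex.exp_nat_mul, ← Complex.exp_add, mul_assoc (1 / (d : ℂ)),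
      mul_assoc (1 / (d : ℂ)), ← Complex.exp_add, ← Complex.exp_add]
    congr 1
    · push_cast; ring
    · congr 1
      simp only [rho, hθdef]
      push_cast
      field_simp [hdC]
      ring
  rw [overlap]
  simp only [key]
  rw [← Finset.mul_sum, Fin.sum_univ_eq_sum_range (fun i => z ^ i) d]
  -- z ≠ 1
  have hz1 : z ≠ 1 := by
    intro h
    rw [hzdef, Complex.exp_eq_one_iff] at h
    obtain ⟨n, hn⟩ := h
    have h2 : ((θ / d : ℝ) : ℂ) = (n : ℂ) := by
      have := mul_left_cancel₀ Complex.two_pi_I_ne_zero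
        (show (2 * (Real.pi : ℂ) * Complex.I) * ((θ : ℂ) / (d : ℂ))
            = (2 * (Real.pi : ℂ) * Complex.I) * (n : ℂ) by linear_combination hn)
      push_cast
      exact this
    have h3 : θ / d = (n : ℝ) := by exact_mod_cast h2
    exact hθ n (by field_simp at h3; linarith)
  rw [geom_sum_eq hz1]
  have hzd : z ^ d = Complex.exp (2 * (Real.pi : ℂ) * Complex.I * (θ : ℂ)) := by
    rw [hzdef, ← Complex.exp_nat_mul]
    congr 1
    field_simp
  -- sin (πθ/d) ≠ 0
  have hsd : Real.sin (Real.pi * θ / d) ≠ 0 := by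
    rw [Real.sin_ne_zero_iff]
    intro n hn
    refine hθ n ?_
    have h4 : Real.pi * θ / d = n * Real.pi := hn.symm
    field_simp at h4
    have := mul_left_cancel₀ Real.pi_ne_zero
      (show Real.pi * θ = Real.pi * ((d : ℝ) * n) by rw [h4])
    linarith
  have hz1' : z - 1 ≠ 0 := sub_ne_zero.mpr hz1
  -- the core trigonometric identity
  have main : Complex.exp (2 * (Real.pi : ℂ) * Complex.I *
        ((-(((d : ℝ) - 1) / 2 * θ) : ℝ) / (d : ℂ)))
      * ((z ^ d - 1) / (z - 1))
      = ((Real.sin (Real.pi * θ) : ℝ) : ℂ) / ((Real.sin (Real.pi * θ / d) : ℝ) : ℂ) := by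
    set w : ℂ := (Real.pi : ℂ) * (θ : ℂ) / (d : ℂ) * Complex.I with hw
    set A : ℂ := Complex.exp w with hA
    have hA0 : A ≠ 0 := Complex.exp_ne_zero w
    have hB0 : A ^ d ≠ 0 := pow_ne_zero d hA0
    have e1 : Complex.exp (2 * (Real.pi : ℂ) * Complex.I *
        ((-(((d : ℝ) - 1) / 2 * θ) : ℝ) / (d : ℂ))) = (A ^ d)⁻¹ * A := by
      rw [show (2 * (Real.pi : ℂ) * Complex.I *
          ((-(((d : ℝ) - 1) / 2 * θ) : ℝ) / (d : ℂ))) = -((d : ℂ) * w) + w by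
        rw [hw]; push_cast; field_simp; ring]
      rw [Complex.exp_add, Complex.exp_neg, Complex.exp_nat_mul]
    have e2 : z ^ d = A ^ d * A ^ d := by
      rw [hzd, show (2 * (Real.pi : ℂ) * Complex.I * (θ : ℂ)) = (d : ℂ) * w + (d : ℂ) * w by
        rw [hw]; field_simp; ring]
      rw [Complex.exp_add, Complex.exp_nat_mul]
    have e3 : z = A * A := by
      rw [hzdef, show (2 * (Real.pi : ℂ) * Complex.I * ((θ : ℂ) / (d : ℂ))) = w + w by
        rw [hw]; field_simp; ring]
      rw [Complex.exp_add]
    have hx4 : ((Real.pi * θ / ↑d : ℝ) : ℂ) * Complex.I = w := by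
      rw [hw]; push_cast; ring
    have e4 : ((Real.sin (Real.pi * θ / d) : ℝ) : ℂ) = (A⁻¹ - A) * Complex.I / 2 := by
      rw [Complex.ofReal_sin, Complex.sin, neg_mul, hx4, Complex.exp_neg, ← hA]
    have hx5 : ((Real.pi * θ : ℝ) : ℂ) * Complex.I = (d : ℂ) * w := by
      rw [hw]; push_cast; field_simp
    have e5 : ((Real.sin (Real.pi * θ) : ℝ) : ℂ) = ((A ^ d)⁻¹ - A ^ d) * Complex.I / 2 := by
      rw [Complex.ofReal_sin, Complex.sin, neg_mul, hx5, Complex.exp_neg,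
        Complex.exp_nat_mul, ← hA]
    have hsdC : ((Real.sin (Real.pi * θ / d) : ℝ) : ℂ) ≠ 0 := Complex.ofReal_ne_zero.mpr hsd
    rw [e3] at hz1'
    rw [e4] at hsdC
    obtain ⟨B, hB⟩ : ∃ B, A ^ d = B := ⟨_, rfl⟩
    rw [hB] at e1 e2 e5 hB0
    rw [e1, e2, e3, e4, e5, mul_div_assoc', div_eq_div_iff hz1' hsdC]
    clear_value A w z θ
    field_simp [hA0, hB0]
    ring
  rw [mul_assoc, main]
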